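/- In the setting of the contrastive loss with temperature τ and batch 𝔅 = {x_p'} ∪ 𝔑, suppose that for all x, y in the domain, |⟨f(x), f(y)⟩| ≤ S where S ≤ τ/10. Then for every s, the softmax logit ℓ'_s = exp(⟨f(x_p), f(x_{n,s})⟩/τ) / Σ_{x ∈ 𝔅} exp(⟨f(x_p), f(x)⟩/τ) satisfies |ℓ'_s − 1/|𝔅|| ≤ C·S/(τ·|𝔅|) for an absolute constant C. -/

import Mathlib

open Real
open scoped BigOperators

/-- with all pairwise similarities bounded by `S ≤ τ/10`, every
softmax logit is within `C·S/(τ·|𝔅|)` of the uniform weight `1/|𝔅|`. -/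
theorem stmt8 :
    ∃ C : ℝ, 0 < C ∧
    ∀ {X : Type} [DecidableEq X] (m : ℕ) (f : X → Fin m → ℝ) (τ S : ℝ),
      0 < τ → S ≤ τ / 10 →
      (∀ x y : X, |∑ k, f x k * f y k| ≤ S) →
      ∀ (B : Finset X) (xp xs : X), xs ∈ B →
        |Real.exp ((∑ k, f xp k * f xs k) / τ) /
            (∑ x ∈ B, Real.exp ((∑ k, f xp k * f x k) / τ)) - 1 / B.card|
          ≤ C * S / (τ * B.card) := by
  refine ⟨4, by norm_num, ?_⟩
  intro X _ m f τ S hτ hS hbound B xp xs hxs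
  have hS0 : 0 ≤ S := le_trans (abs_nonneg _) (hbound xp xp)
  have hn : (0:ℝ) < B.card := by
    exact_mod_cast Finset.card_pos.mpr ⟨xs, hxs⟩
  set t := S / τ with ht
  have ht0 : 0 ≤ t := div_nonneg hS0 hτ.le
  have ht1 : t ≤ 1/10 := by
    rw [ht, div_le_div_iff₀ hτ (by norm_num)]
    linarith
  have hax : ∀ x : X, -t ≤ (∑ k, f xp k * f x k) / τ ∧ (∑ k, f xp k * f x k) / τ ≤ t := by
    intro x
    have h := hbound xp x
    have h1 := abs_le.mp h
    constructor
    · rw [ht, ← neg_div]; exact div_le_div_of_nonneg_right h1.1 hτ.le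
    · rw [ht]; exact div_le_div_of_nonneg_right h1.2 hτ.le
  set N := Real.exp ((∑ k, f xp k * f xs k) / τ) with hN
  set D := ∑ x ∈ B, Real.exp ((∑ k, f xp k * f x k) / τ) with hD
  have hDpos : 0 < D :=
    Finset.sum_pos (fun x _ => Real.exp_pos _) ⟨xs, hxs⟩
  have hNlo : Real.exp (-t) ≤ N := Real.exp_le_exp.mpr (hax xs).1
  have hNhi : N ≤ Real.exp t := Real.exp_le_exp.mpr (hax xs).2
  have hDlo : (B.card : ℝ) * Real.exp (-t) ≤ D := by
    calc (B.card : ℝ) * Real.exp (-t) = ∑ _x ∈ B, Real.exp (-t) := by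
          rw [Finset.sum_const, nsmul_eq_mul]
      _ ≤ D := Finset.sum_le_sum fun x _ => Real.exp_le_exp.mpr (hax x).1
  have hDhi : D ≤ (B.card : ℝ) * Real.exp t := by
    calc D ≤ ∑ _x ∈ B, Real.exp t :=
          Finset.sum_le_sum fun x _ => Real.exp_le_exp.mpr (hax x).2
      _ = (B.card : ℝ) * Real.exp t := by rw [Finset.sum_const, nsmul_eq_mul]
  have hub : N / D ≤ Real.exp (2*t) / B.card := by
    have h1 : N / D ≤ Real.exp t / ((B.card : ℝ) * Real.exp (-t)) :=
      div_le_div₀ (Real.exp_pos t).le hNhi (by positivity) hDlo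
    have h2 : Real.exp t / ((B.card : ℝ) * Real.exp (-t)) = Real.exp (2*t) / B.card := by
      rw [show (2:ℝ)*t = t - (-t) by ring, Real.exp_sub]
      field_simp
    linarith [h1, h2.le]
  have hlb : Real.exp (-(2*t)) / B.card ≤ N / D := by
    have h1 : Real.exp (-t) / ((B.card : ℝ) * Real.exp t) ≤ N / D :=
      div_le_div₀ (by positivity) hNlo hDpos hDhi
    have h2 : Real.exp (-t) / ((B.card : ℝ) * Real.exp t) = Real.exp (-(2*t)) / B.card := by
      rw [show -((2:ℝ)*t) = -t - t by ring, Real.exp_sub]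
      field_simp
    linarith [h1, h2.le]
  have he1 : Real.exp (2*t) ≤ 1 + 4*t := by
    have h1 : 1 - 2*t ≤ Real.exp (-(2*t)) := by
      have := Real.add_one_le_exp (-(2*t)); linarith
    have h2 : Real.exp (-(2*t)) * Real.exp (2*t) = 1 := by
      rw [← Real.exp_add]; simp
    have h3 : 0 < Real.exp (2*t) := Real.exp_pos _
    nlinarith
  have he2 : 1 - 2*t ≤ Real.exp (-(2*t)) := by
    have := Real.add_one_le_exp (-(2*t)); linarith
  have hgoal : |N / D - 1 / B.card| ≤ 4 * t / B.card := by
    rw [abs_le]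
    constructor
    · have : (1 - 2*t) / (B.card:ℝ) ≤ N / D :=
        le_trans (div_le_div_of_nonneg_right he2 hn.le) hlb
      have h4 : 1 / (B.card:ℝ) - (1 - 2*t)/B.card = 2*t/B.card := by
        field_simp
        ring
      have h5 : 2*t/(B.card:ℝ) ≤ 4*t/B.card := by
        apply div_le_div_of_nonneg_right _ hn.le
        linarith
      linarith
    · have : N / D ≤ (1 + 4*t) / (B.card:ℝ) :=
        le_trans hub (div_le_div_of_nonneg_right he1 hn.le)
      have h4 : (1 + 4*t)/(B.card:ℝ) - 1/B.card = 4*t/B.card := by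
        field_simp
        ring
      linarith
  have heq : 4 * t / (B.card:ℝ) = 4 * S / (τ * B.card) := by
    rw [ht]; field_simp
  linarith [hgoal, heq.le]
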